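/- If r : D → ℝ is convex on a convex set D ⊆ ℝ, then its perspective q(y, s) = s · r(y/s) is jointly convex on {(y, s) : s > 0, y/s ∈ D}. In particular, q(y,s) = (Eβs + (T-K)y - √(E²β²s² - 2(T-K)(Eβ+2)ys + (T-K)²y²)) / (2(T-K)β) is jointly convex in (y, s) for s > 0 on the domain where the square root argument is nonnegative. -/

import Mathlib

lemma perspective_aux (r : ℝ → ℝ) (D : Set ℝ) (hD : Convex ℝ D) (hr : ConvexOn ℝ D r) :
    ConvexOn ℝ {q : ℝ × ℝ | 0 < q.2 ∧ q.1 / q.2 ∈ D}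
      (fun q : ℝ × ℝ => q.2 * r (q.1 / q.2)) := by
  constructor
  · intro p hp q hq a b ha hb hab
    obtain ⟨hp2, hpD⟩ := hp
    obtain ⟨hq2, hqD⟩ := hq
    have hs : 0 < a * p.2 + b * q.2 := by
      rcases ha.lt_or_eq with h | h
      · exact add_pos_of_pos_of_nonneg (mul_pos h hp2) (mul_nonneg hb hq2.le)
      · have hb1 : b = 1 := by linarith
        simp [← h, hb1, hq2]
    refine ⟨hs, ?_⟩
    have hw : (a * p.2 + b * q.2)⁻¹ * (a * p.2) + (a * p.2 + b * q.2)⁻¹ * (b * q.2) = 1 := by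
      field_simp
    have := hD hpD hqD (mul_nonneg (by positivity) (mul_nonneg ha hp2.le))
      (mul_nonneg (by positivity) (mul_nonneg hb hq2.le)) hw
    convert this using 1
    simp only [smul_eq_mul, Prod.fst_add, Prod.snd_add, Prod.smul_fst, Prod.smul_snd]
    field_simp
  · intro p hp q hq a b ha hb hab
    obtain ⟨hp2, hpD⟩ := hp
    obtain ⟨hq2, hqD⟩ := hq
    simp only [Prod.fst_add, Prod.snd_add, Prod.smul_fst, Prod.smul_snd, smul_eq_mul]
    have hs : 0 < a * p.2 + b * q.2 := by
      rcases ha.lt_or_eq with h | h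
      · exact add_pos_of_pos_of_nonneg (mul_pos h hp2) (mul_nonneg hb hq2.le)
      · have hb1 : b = 1 := by linarith
        simp [← h, hb1, hq2]
    set s := a * p.2 + b * q.2 with hsdef
    have hw : s⁻¹ * (a * p.2) + s⁻¹ * (b * q.2) = 1 := by field_simp; exact hsdef.symm
    have key := hr.2 hpD hqD (mul_nonneg (by positivity) (mul_nonneg ha hp2.le))
      (mul_nonneg (by positivity) (mul_nonneg hb hq2.le)) hw
    simp only [smul_eq_mul] at key
    have harg : (a * p.1 + b * q.1) / s
        = s⁻¹ * (a * p.2) * (p.1 / p.2) + s⁻¹ * (b * q.2) * (q.1 / q.2) := by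
      field_simp
    rw [harg]
    calc s * r (s⁻¹ * (a * p.2) * (p.1 / p.2) + s⁻¹ * (b * q.2) * (q.1 / q.2))
        ≤ s * (s⁻¹ * (a * p.2) * r (p.1 / p.2) + s⁻¹ * (b * q.2) * r (q.1 / q.2)) := by
          exact mul_le_mul_of_nonneg_left key hs.le
      _ = a * (p.2 * r (p.1 / p.2)) + b * (q.2 * r (q.1 / q.2)) := by
          field_simp

lemma sqrt_concave_aux (A m c4 : ℝ) (hA : 0 < A) (hc : 0 < c4) (D : Set ℝ)
    (hD : Convex ℝ D) (hg : ∀ x ∈ D, 0 ≤ A ^ 2 * (x - m) ^ 2 - c4) :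
    ConcaveOn ℝ D (fun x => Real.sqrt (A ^ 2 * (x - m) ^ 2 - c4)) := by
  have key : ∀ x ∈ D, ∀ y ∈ D, c4 ≤ A ^ 2 * ((x - m) * (y - m)) := by
    have main : ∀ x ∈ D, ∀ y ∈ D, x ≤ y → c4 ≤ A ^ 2 * ((x - m) * (y - m)) := by
      intro x hx y hy hxy
      have hgx := hg x hx
      have hgy := hg y hy
      rcases lt_or_ge m x with h1 | h1
      · nlinarith
      · rcases lt_or_ge y m with h2 | h2
        · nlinarith
        · exfalso
          have hmD : m ∈ D := hD.ordConnected.out hx hy ⟨h1, h2⟩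
          have := hg m hmD
          nlinarith
    intro x hx y hy
    rcases le_total x y with h | h
    · exact main x hx y hy h
    · have := main y hy x hx h
      linarith [this, mul_comm (y - m) (x - m)]
  refine ⟨hD, ?_⟩
  intro x hx y hy a b ha hb hab
  simp only [smul_eq_mul]
  have hgx := hg x hx
  have hgy := hg y hy
  set p := Real.sqrt (A ^ 2 * (x - m) ^ 2 - c4) with hp
  set q := Real.sqrt (A ^ 2 * (y - m) ^ 2 - c4) with hq
  have hp0 : 0 ≤ p := Real.sqrt_nonneg _
  have hq0 : 0 ≤ q := Real.sqrt_nonneg _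
  have hp2 : p ^ 2 = A ^ 2 * (x - m) ^ 2 - c4 := Real.sq_sqrt hgx
  have hq2 : q ^ 2 = A ^ 2 * (y - m) ^ 2 - c4 := Real.sq_sqrt hgy
  have hkey := key x hx y hy
  have hpq : p * q ≤ A ^ 2 * ((x - m) * (y - m)) - c4 := by
    have h1 : p * q = Real.sqrt ((A ^ 2 * (x - m) ^ 2 - c4) * (A ^ 2 * (y - m) ^ 2 - c4)) :=
      (Real.sqrt_mul hgx _).symm
    have h2 : (A ^ 2 * (x - m) ^ 2 - c4) * (A ^ 2 * (y - m) ^ 2 - c4)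
        ≤ (A ^ 2 * ((x - m) * (y - m)) - c4) ^ 2 := by
      nlinarith [sq_nonneg (x - y), mul_pos (pow_pos hA 2) hc]
    calc p * q = _ := h1
      _ ≤ Real.sqrt ((A ^ 2 * ((x - m) * (y - m)) - c4) ^ 2) := Real.sqrt_le_sqrt h2
      _ = A ^ 2 * ((x - m) * (y - m)) - c4 := Real.sqrt_sq (by linarith)
  have h1ab : (a + b) ^ 2 = 1 := by rw [hab]; ring
  have hid : A ^ 2 * (a * (x - m) + b * (y - m)) ^ 2 - c4
      = (a * p + b * q) ^ 2 + 2 * (a * b) * (A ^ 2 * ((x - m) * (y - m)) - c4 - p * q) := by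
    linear_combination (-a ^ 2) * hp2 - b ^ 2 * hq2 + c4 * h1ab
  have harg : a * x + b * y - m = a * (x - m) + b * (y - m) := by linear_combination m * hab
  have hgoal2 : (a * p + b * q) ^ 2 ≤ A ^ 2 * (a * x + b * y - m) ^ 2 - c4 := by
    rw [harg, hid]
    nlinarith [mul_nonneg (mul_nonneg ha hb) (sub_nonneg.2 hpq)]
  have h0 : 0 ≤ a * p + b * q := by positivity
  calc a * p + b * q = Real.sqrt ((a * p + b * q) ^ 2) := (Real.sqrt_sq h0).symm
    _ ≤ Real.sqrt (A ^ 2 * (a * x + b * y - m) ^ 2 - c4) := Real.sqrt_le_sqrt hgoal2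

/-- The perspective `q(y,s) = s · r(y/s)` of a convex function `r` on a convex set `D` is
jointly convex on `{(y, s) | s > 0, y/s ∈ D}`.  In particular, the perspective of
`r(x) = (Eβ + (T-K)x - √(E²β² - 2(T-K)(Eβ+2)x + (T-K)²x²))/(2(T-K)β)`, namely
`q(y,s) = (Eβs + (T-K)y - √(E²β²s² - 2(T-K)(Eβ+2)ys + (T-K)²y²))/(2(T-K)β)`, is jointly
convex in `(y, s)` for `s > 0` on the domain where the square-root argument is
nonnegative. -/
theorem perspective_convex (T K E β : ℝ) (hK : 0 < K) (hTK : K < T) (hE : 0 < E)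
    (hβ : 0 < β) :
    (∀ (r : ℝ → ℝ) (D : Set ℝ), Convex ℝ D → ConvexOn ℝ D r →
      ConvexOn ℝ {q : ℝ × ℝ | 0 < q.2 ∧ q.1 / q.2 ∈ D}
        (fun q : ℝ × ℝ => q.2 * r (q.1 / q.2))) ∧
    ∀ D : Set ℝ, Convex ℝ D →
      (∀ x ∈ D, 0 ≤ E ^ 2 * β ^ 2 - 2 * (T - K) * (E * β + 2) * x + (T - K) ^ 2 * x ^ 2) →
      ConvexOn ℝ {q : ℝ × ℝ | 0 < q.2 ∧ q.1 / q.2 ∈ D}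
        (fun q : ℝ × ℝ =>
          (E * β * q.2 + (T - K) * q.1 -
            Real.sqrt (E ^ 2 * β ^ 2 * q.2 ^ 2 - 2 * (T - K) * (E * β + 2) * q.1 * q.2 +
              (T - K) ^ 2 * q.1 ^ 2)) / (2 * (T - K) * β)) := by
  refine ⟨fun r D hD hr => perspective_aux r D hD hr, ?_⟩
  intro D hD hgD
  have hA : 0 < T - K := sub_pos.2 hTK
  have hAne : T - K ≠ 0 := hA.ne'
  set m : ℝ := (E * β + 2) / (T - K) with hm
  have hc : 0 < 4 * (E * β + 1) := by nlinarith [mul_pos hE hβ]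
  have hargeq : ∀ x : ℝ, E ^ 2 * β ^ 2 - 2 * (T - K) * (E * β + 2) * x + (T - K) ^ 2 * x ^ 2
      = (T - K) ^ 2 * (x - m) ^ 2 - 4 * (E * β + 1) := by
    intro x
    rw [hm]
    field_simp
    ring
  -- the base function r
  set r : ℝ → ℝ := fun x =>
    (E * β + (T - K) * x -
      Real.sqrt (E ^ 2 * β ^ 2 - 2 * (T - K) * (E * β + 2) * x + (T - K) ^ 2 * x ^ 2)) /
      (2 * (T - K) * β) with hrdef
  have hgD' : ∀ x ∈ D, 0 ≤ (T - K) ^ 2 * (x - m) ^ 2 - 4 * (E * β + 1) := by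
    intro x hx
    rw [← hargeq x]
    exact hgD x hx
  have hconc := sqrt_concave_aux (T - K) m (4 * (E * β + 1)) hA hc D hD hgD'
  have hcpos : 0 < 2 * (T - K) * β := by positivity
  have hr : ConvexOn ℝ D r := by
    refine ⟨hD, ?_⟩
    intro x hx y hy a b ha hb hab
    simp only [smul_eq_mul, hrdef]
    have hcon := hconc.2 hx hy ha hb hab
    simp only [smul_eq_mul] at hcon
    rw [hargeq x, hargeq y, hargeq (a * x + b * y)]
    have hnum : E * β + (T - K) * (a * x + b * y) -
        Real.sqrt ((T - K) ^ 2 * (a * x + b * y - m) ^ 2 - 4 * (E * β + 1))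
        ≤ a * (E * β + (T - K) * x -
            Real.sqrt ((T - K) ^ 2 * (x - m) ^ 2 - 4 * (E * β + 1))) +
          b * (E * β + (T - K) * y -
            Real.sqrt ((T - K) ^ 2 * (y - m) ^ 2 - 4 * (E * β + 1))) := by
      have hb' : b = 1 - a := by linarith
      subst hb'
      nlinarith [hcon]
    calc (E * β + (T - K) * (a * x + b * y) -
          Real.sqrt ((T - K) ^ 2 * (a * x + b * y - m) ^ 2 - 4 * (E * β + 1))) /
          (2 * (T - K) * β)
        ≤ (a * (E * β + (T - K) * x -
              Real.sqrt ((T - K) ^ 2 * (x - m) ^ 2 - 4 * (E * β + 1))) +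
            b * (E * β + (T - K) * y -
              Real.sqrt ((T - K) ^ 2 * (y - m) ^ 2 - 4 * (E * β + 1)))) /
          (2 * (T - K) * β) := by
          exact div_le_div_of_nonneg_right hnum hcpos.le |>.trans_eq rfl
      _ = a * ((E * β + (T - K) * x -
              Real.sqrt ((T - K) ^ 2 * (x - m) ^ 2 - 4 * (E * β + 1))) / (2 * (T - K) * β)) +
          b * ((E * β + (T - K) * y -
              Real.sqrt ((T - K) ^ 2 * (y - m) ^ 2 - 4 * (E * β + 1))) / (2 * (T - K) * β)) := by
          ring
  have hpersp := perspective_aux r D hD hr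
  obtain ⟨hS, hI⟩ := hpersp
  have heq : ∀ z : ℝ × ℝ, z ∈ {q : ℝ × ℝ | 0 < q.2 ∧ q.1 / q.2 ∈ D} →
      z.2 * r (z.1 / z.2)
      = (E * β * z.2 + (T - K) * z.1 -
          Real.sqrt (E ^ 2 * β ^ 2 * z.2 ^ 2 - 2 * (T - K) * (E * β + 2) * z.1 * z.2 +
            (T - K) ^ 2 * z.1 ^ 2)) / (2 * (T - K) * β) := by
    intro z hz
    obtain ⟨hz2, -⟩ := hz
    have hsq : E ^ 2 * β ^ 2 * z.2 ^ 2 - 2 * (T - K) * (E * β + 2) * z.1 * z.2 +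
        (T - K) ^ 2 * z.1 ^ 2
        = z.2 ^ 2 * (E ^ 2 * β ^ 2 - 2 * (T - K) * (E * β + 2) * (z.1 / z.2) +
            (T - K) ^ 2 * (z.1 / z.2) ^ 2) := by
      field_simp
    rw [hrdef]
    simp only []
    rw [hsq, Real.sqrt_mul (sq_nonneg _), Real.sqrt_sq hz2.le]
    field_simp
  refine ⟨hS, ?_⟩
  intro p hp q hq a b ha hb hab
  have hmem := hS hp hq ha hb hab
  simp only [smul_eq_mul] at *
  rw [← heq _ hmem, ← heq _ hp, ← heq _ hq]
  exact hI hp hq ha hb hab
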